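/- Let G be a finite group acting on a topological space X and H ≤ G. Consider the directed system of spaces (X × ℝ[G]^n)_H, n ≥ 0, with maps induced by the inclusions v ↦ (v, 0), and the collapse maps (X × ℝ[G]^n)_H → X^H given by projection. Then the induced map colim_n (X × ℝ[G]^n)_H → X^H is a weak homotopy equivalence. -/

import Mathlib

open CategoryTheory Metric

universe u

/-! ### Weak homotopy equivalences

A continuous map `f : A → B` is a weak homotopy equivalence iff for every `n ≥ 0` and
every commuting square given by `γ : S^{n-1} → A` and `β : D^n → B` with
`β|_{S^{n-1}} = f ∘ γ`, there is a lift `γ' : D^n → A` of `γ` such that `f ∘ γ'` is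
homotopic to `β` relative to `S^{n-1}`.  (This is the standard lifting
characterization of weak homotopy equivalences, i.e. of maps inducing bijections on
`π₀` and on all homotopy groups at all basepoints.) -/
def IsWeakHomotopyEquiv {A B : Type u} [TopologicalSpace A] [TopologicalSpace B]
    (f : C(A, B)) : Prop :=
  ∀ (n : ℕ) (γ : C(sphere (0 : EuclideanSpace ℝ (Fin n)) 1, A))
    (β : C(closedBall (0 : EuclideanSpace ℝ (Fin n)) 1, B)),
    (∀ y : sphere (0 : EuclideanSpace ℝ (Fin n)) 1,
      β ⟨y.1, sphere_subset_closedBall y.2⟩ = f (γ y)) →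
    ∃ γ' : C(closedBall (0 : EuclideanSpace ℝ (Fin n)) 1, A),
      (∀ y : sphere (0 : EuclideanSpace ℝ (Fin n)) 1,
        γ' ⟨y.1, sphere_subset_closedBall y.2⟩ = γ y) ∧
      Nonempty ((f.comp γ').HomotopyRel β
        {z : closedBall (0 : EuclideanSpace ℝ (Fin n)) 1 |
          (z : EuclideanSpace ℝ (Fin n)) ∈ sphere (0 : EuclideanSpace ℝ (Fin n)) 1})

/-- The regular representation `ℝ[G]`, modeled as functions `G → ℝ` with `G` permuting
the standard basis by left multiplication: `(g • f) k = f (g⁻¹ k)`. -/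
noncomputable instance regularRep {G : Type u} [Group G] : MulAction G (G → ℝ) where
  smul g f := fun k => f (g⁻¹ * k)
  one_smul f := by
    funext k
    show f (1⁻¹ * k) = f k
    rw [inv_one, one_mul]
  mul_smul g h f := by
    funext k
    show f ((g * h)⁻¹ * k) = f (h⁻¹ * (g⁻¹ * k))
    rw [mul_inv_rev, mul_assoc]

variable {G : Type u} [Group G] [Fintype G]
variable {X : Type u} [TopologicalSpace X] [MulAction G X] (H : Subgroup G)

/-- The `n`-th stage `(X × ℝ[G]ⁿ)_H`: the subspace of `X × ℝ[G]ⁿ` of points with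
isotropy group exactly `H` (with `G` acting diagonally). -/
def stage (X : Type u) [TopologicalSpace X] [MulAction G X] (H : Subgroup G) (n : ℕ) :
    TopCat :=
  TopCat.of { p : X × (Fin n → G → ℝ) // MulAction.stabilizer G p = H }

/-- Extending by zero preserves the stabilizer. -/
lemma stabilizer_snoc (x : X) {n : ℕ} (v : Fin n → G → ℝ) :
    MulAction.stabilizer G ((x, Fin.snoc v 0) : X × (Fin (n + 1) → G → ℝ)) =
      MulAction.stabilizer G ((x, v) : X × (Fin n → G → ℝ)) := by
  ext g
  simp only [MulAction.mem_stabilizer_iff]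
  constructor
  · intro hg
    have h1 : g • x = x := congrArg Prod.fst hg
    have h2 : g • (Fin.snoc v 0 : Fin (n + 1) → G → ℝ) = Fin.snoc v 0 :=
      congrArg Prod.snd hg
    refine Prod.ext h1 ?_
    show g • v = v
    funext i
    have h3 := congrFun h2 i.castSucc
    rw [Pi.smul_apply, Fin.snoc_castSucc] at h3
    rw [Pi.smul_apply]
    exact h3
  · intro hg
    have h1 : g • x = x := congrArg Prod.fst hg
    have h2 : g • v = v := congrArg Prod.snd hg
    refine Prod.ext h1 ?_
    show g • (Fin.snoc v 0 : Fin (n + 1) → G → ℝ) = Fin.snoc v 0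
    funext i
    induction i using Fin.lastCases with
    | last =>
      rw [Pi.smul_apply, Fin.snoc_last]
      funext k
      rfl
    | cast j =>
      rw [Pi.smul_apply, Fin.snoc_castSucc]
      exact congrFun h2 j

/-- The inclusion `(X × ℝ[G]ⁿ)_H → (X × ℝ[G]ⁿ⁺¹)_H` induced by `v ↦ (v, 0)`. -/
def stageMap (n : ℕ) : stage X H n ⟶ stage X H (n + 1) :=
  TopCat.ofHom <| ContinuousMap.mk
    (fun p => ⟨(p.1.1, Fin.snoc p.1.2 0), by rw [stabilizer_snoc]; exact p.2⟩)
    (by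
      apply Continuous.subtype_mk
      refine Continuous.prodMk (continuous_subtype_val.fst) ?_
      apply continuous_pi
      intro i
      induction i using Fin.lastCases with
      | last =>
        simp only [Fin.snoc_last]
        exact continuous_const
      | cast j =>
        simp only [Fin.snoc_castSucc]
        exact (continuous_apply j).comp continuous_subtype_val.snd)

/-- The directed system `(X × ℝ[G]ⁿ)_H`, `n ≥ 0`. -/
noncomputable def stageFunctor : ℕ ⥤ TopCat := Functor.ofSequence (fun n => stageMap (X := X) H n)

/-- The `H`-fixed points `X^H`. -/
def fixedH (Y : Type u) [TopologicalSpace Y] [MulAction G Y] (K : Subgroup G) : TopCat :=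
  TopCat.of { y : Y // ∀ g ∈ K, g • y = y }

/-- The collapse map `(X × ℝ[G]ⁿ)_H → X^H`, projecting to `X` (induced by the collapse
maps `V → *`). -/
def collapse (n : ℕ) : stage X H n ⟶ fixedH X H :=
  TopCat.ofHom <| ContinuousMap.mk
    (fun p => ⟨p.1.1, fun g hg => by
      have hmem : g ∈ MulAction.stabilizer G p.1 := p.2.symm ▸ hg
      exact congrArg Prod.fst (MulAction.mem_stabilizer_iff.mp hmem)⟩)
    (by
      apply Continuous.subtype_mk
      exact continuous_subtype_val.fst)

/-- The cocone over the directed system given by the collapse maps. -/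
noncomputable def collapseCocone : Limits.Cocone (stageFunctor (X := X) H) where
  pt := fixedH X H
  ι :=
    { app := collapse H
      naturality := by
        have key : ∀ (n m : ℕ) (h : n ≤ m),
            (stageFunctor (X := X) H).map (homOfLE h) ≫ collapse H m = collapse H n := by
          intro n m h
          induction m, h using Nat.le_induction with
          | base =>
            rw [show (homOfLE (le_refl n) : n ⟶ n) = 𝟙 n from rfl, CategoryTheory.Functor.map_id]
            exact Category.id_comp _
          | succ m hnm ih =>
            rw [← homOfLE_comp hnm (Nat.le_succ m), Functor.map_comp]
            refine (Category.assoc _ _ _).trans ?_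
            have hstep : (stageFunctor (X := X) H).map (homOfLE (Nat.le_succ m)) =
                stageMap (X := X) H m := Functor.ofSequence_map_homOfLE_succ _ m
            rw [hstep]
            have hcoll : stageMap (X := X) H m ≫ collapse H (m + 1) = collapse H m := rfl
            erw [hcoll, ih]
        intro n m f
        have hf : f = homOfLE (leOfHom f) := rfl
        rw [hf, key, Functor.const_obj_map]
        exact (Category.comp_id _).symm }

set_option linter.unusedSectionVars false
/-! ### Auxiliary material for the proof -/

section Aux

open Limits

/-- The basic vector in `ℝ[G]` with stabilizer exactly `H`: the indicator of `H`. -/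
noncomputable def v0 : G → ℝ := Set.indicator (H : Set G) 1

lemma gsmul_apply (g : G) (w : G → ℝ) (k : G) : (g • w) k = w (g⁻¹ * k) := rfl

lemma gsmul_add (g : G) (u w : G → ℝ) : g • (u + w) = g • u + g • w := rfl

lemma gsmul_rsmul (g : G) (c : ℝ) (w : G → ℝ) : g • (c • w) = c • (g • w) := rfl

lemma gsmul_zero' (g : G) : g • (0 : G → ℝ) = 0 := rfl

lemma smul_v0_of_mem {g : G} (hg : g ∈ H) : g • v0 H = v0 H := by
  funext k
  show v0 H (g⁻¹ * k) = v0 H k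
  have hmem : g⁻¹ * k ∈ (H : Set G) ↔ k ∈ (H : Set G) := by
    constructor
    · intro h
      have := H.mul_mem hg h
      simpa [mul_assoc] using this
    · intro h
      exact H.mul_mem (H.inv_mem hg) h
  unfold v0
  by_cases hk : k ∈ (H : Set G)
  · rw [Set.indicator_of_mem (hmem.mpr hk), Set.indicator_of_mem hk]
    rfl
  · rw [Set.indicator_of_notMem (fun h => hk (hmem.mp h)), Set.indicator_of_notMem hk]

lemma mem_of_smul_v0 {g : G} {c : ℝ} (hc : c ≠ 0) (h : g • (c • v0 H) = c • v0 H) :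
    g ∈ H := by
  have hk := congrFun h g
  have h1 : (g • (c • v0 H)) g = c * v0 H (g⁻¹ * g) := rfl
  have h2 : (c • v0 H) g = c * v0 H g := rfl
  rw [h1, h2, inv_mul_cancel] at hk
  have hone : v0 H 1 = 1 := Set.indicator_of_mem (H.one_mem) 1
  rw [hone, mul_one] at hk
  by_contra hgH
  have : v0 H g = 0 := Set.indicator_of_notMem hgH 1
  rw [this, mul_zero] at hk
  exact hc hk

lemma mem_of_smul_v0' {g : G} (h : g • v0 H = v0 H) : g ∈ H := by
  refine mem_of_smul_v0 H (c := 1) one_ne_zero ?_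
  rw [one_smul]
  exact h

/-- Extension-by-zero of a finite vector of `ℝ[G]`'s to an `ℕ`-indexed family. -/
noncomputable def sl (n : ℕ) (v : Fin n → G → ℝ) (j : ℕ) : G → ℝ :=
  if h : j < n then v ⟨j, h⟩ else 0

/-- Coefficient functions for the piecewise-linear contraction. -/
noncomputable def ca (t : ℝ) : ℝ := max (1 - 4 * t) 0
noncomputable def cb (t : ℝ) : ℝ := min (max (min (4 * t) (3 - 4 * t)) 0) 1
noncomputable def cc (t : ℝ) : ℝ := min (max (min (4 * t - 1) (4 - 4 * t)) 0) 1
noncomputable def cd (t : ℝ) : ℝ := max (4 * t - 3) 0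

/-- The key contraction formula: at time `t`, the `j`-th ℝ[G]-coordinate of the image of
`(x, v)`. -/
noncomputable def wnat (n : ℕ) (v : Fin n → G → ℝ) (t : ℝ) (j : ℕ) : G → ℝ :=
  ca t • sl n v j + cb t • (if j % 2 = 0 then sl n v (j / 2) else 0) +
    cc t • (if j = 1 then v0 H else 0) + cd t • (if j = 0 then v0 H else 0)

lemma wnat_zero (n : ℕ) (v : Fin n → G → ℝ) (j : ℕ) : wnat H n v 0 j = sl n v j := by
  have hca : ca 0 = 1 := by norm_num [ca, max_def]
  have hcb : cb 0 = 0 := by norm_num [cb, min_def, max_def]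
  have hcc : cc 0 = 0 := by norm_num [cc, min_def, max_def]
  have hcd : cd 0 = 0 := by norm_num [cd, max_def]
  unfold wnat
  rw [hca, hcb, hcc, hcd, one_smul, zero_smul, zero_smul, zero_smul, add_zero, add_zero,
    add_zero]

lemma wnat_one (n : ℕ) (v : Fin n → G → ℝ) (j : ℕ) :
    wnat H n v 1 j = if j = 0 then v0 H else 0 := by
  have hca : ca 1 = 0 := by norm_num [ca, max_def]
  have hcb : cb 1 = 0 := by norm_num [cb, min_def, max_def]
  have hcc : cc 1 = 0 := by norm_num [cc, min_def, max_def]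
  have hcd : cd 1 = 1 := by norm_num [cd, max_def]
  unfold wnat
  rw [hca, hcb, hcc, hcd, one_smul, zero_smul, zero_smul, zero_smul, zero_add, zero_add,
    zero_add]

lemma wnat_ge (n : ℕ) (v : Fin n → G → ℝ) (t : ℝ) {j : ℕ} (hj : 2 * n + 2 ≤ j) :
    wnat H n v t j = 0 := by
  have h1 : sl n v j = 0 := by unfold sl; rw [dif_neg (by omega)]
  have h2 : sl n v (j / 2) = 0 := by unfold sl; rw [dif_neg (by omega)]
  unfold wnat
  rw [h1, h2, if_neg (by omega : ¬ j = 1), if_neg (by omega : ¬ j = 0), ite_self,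
    smul_zero, smul_zero, smul_zero, smul_zero, add_zero, add_zero, add_zero]

lemma sl_snoc (n : ℕ) (v : Fin n → G → ℝ) (j : ℕ) :
    sl (n + 1) (Fin.snoc v 0) j = sl n v j := by
  unfold sl
  by_cases h : j < n
  · rw [dif_pos (by omega : j < n + 1), dif_pos h]
    have he : (⟨j, by omega⟩ : Fin (n + 1)) = Fin.castSucc ⟨j, h⟩ := rfl
    rw [he, Fin.snoc_castSucc]
  · by_cases h' : j < n + 1
    · have hj : j = n := by omega
      rw [dif_pos h', dif_neg h]
      have he : (⟨j, h'⟩ : Fin (n + 1)) = Fin.last n := by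
        apply Fin.ext
        simpa using hj
      rw [he, Fin.snoc_last]
    · rw [dif_neg h', dif_neg h]

lemma wnat_snoc (n : ℕ) (v : Fin n → G → ℝ) (t : ℝ) (j : ℕ) :
    wnat H (n + 1) (Fin.snoc v 0) t j = wnat H n v t j := by
  unfold wnat
  rw [sl_snoc, sl_snoc]

end Aux
section Aux2

open Limits

lemma stab_pair_iff {n : ℕ} {x : X} {v : Fin n → G → ℝ} {g : G} :
    g ∈ MulAction.stabilizer G ((x, v) : X × (Fin n → G → ℝ)) ↔
      g • x = x ∧ ∀ i, g • v i = v i := by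
  rw [MulAction.mem_stabilizer_iff]
  constructor
  · intro h
    refine ⟨congrArg Prod.fst h, fun i => ?_⟩
    have h2 : g • v = v := congrArg Prod.snd h
    have := congrFun h2 i
    rwa [Pi.smul_apply] at this
  · rintro ⟨h1, h2⟩
    exact Prod.ext h1 (funext h2)

lemma stab_wnat {n : ℕ} {x : X} {v : Fin n → G → ℝ}
    (hxv : MulAction.stabilizer G ((x, v) : X × (Fin n → G → ℝ)) = H)
    {t : ℝ} (ht0 : 0 ≤ t) (ht1 : t ≤ 1) :
    MulAction.stabilizer G
      ((x, fun j : Fin (2 * n + 2) => wnat H n v t j.val) :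
        X × (Fin (2 * n + 2) → G → ℝ)) = H := by
  have hmemH : ∀ g, g ∈ H → g • x = x ∧ ∀ i, g • v i = v i := by
    intro g hg
    rw [← hxv] at hg
    exact stab_pair_iff.mp hg
  have hback : ∀ g, g • x = x → (∀ i, g • v i = v i) → g ∈ H := by
    intro g h1 h2
    rw [← hxv]
    exact stab_pair_iff.mpr ⟨h1, h2⟩
  ext g
  constructor
  · intro hg
    obtain ⟨hgx, hgw⟩ := stab_pair_iff.mp hg
    have hw : ∀ j : ℕ, j < 2 * n + 2 → g • wnat H n v t j = wnat H n v t j := by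
      intro j hj
      exact hgw ⟨j, hj⟩
    by_cases hcc : cc t = 0
    · by_cases hcd : cd t = 0
      · -- main case : t ≤ 1/4, only the `a` and `b` coefficients survive
        have ht4 : t ≤ 1 / 4 := by
          by_contra hc
          push_neg at hc
          rcases lt_or_eq_of_le ht1 with ht | ht
          · have h1 : 0 < min (4 * t - 1) (4 - 4 * t) := lt_min (by linarith) (by linarith)
            have h3 : 0 < cc t := by
              unfold cc
              rw [max_eq_left h1.le]
              exact lt_min h1 one_pos
            exact h3.ne' hcc
          · have hone : cd t = 1 := by subst ht; norm_num [cd, max_def]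
            rw [hcd] at hone
            norm_num at hone
        have hca : ca t = 1 - 4 * t := max_eq_left (by linarith)
        have hcb : cb t = 4 * t := by
          unfold cb
          rw [min_eq_left (by linarith : 4 * t ≤ 3 - 4 * t),
            max_eq_left (by linarith : (0:ℝ) ≤ 4 * t),
            min_eq_left (by linarith : 4 * t ≤ 1)]
        by_cases hb0 : t = 0
        · refine hback g hgx (fun i => ?_)
          have hfix := hw i.val (by omega)
          rw [hb0, wnat_zero] at hfix
          have hv : sl n v i.val = v i := by
            unfold sl
            rw [dif_pos i.isLt]
          rwa [hv] at hfix
        · have hbpos : (0:ℝ) < 4 * t := by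
            rcases lt_or_eq_of_le ht0 with h | h
            · linarith
            · exact absurd h.symm hb0
          have hsum : ca t + cb t = 1 := by rw [hca, hcb]; ring
          have hslot : ∀ i : ℕ, i < n →
              ca t • (g • sl n v (2 * i)) + cb t • (g • sl n v i) =
                ca t • sl n v (2 * i) + cb t • sl n v i := by
            intro i hi
            have heq := hw (2 * i) (by omega)
            have he : wnat H n v t (2 * i) = ca t • sl n v (2 * i) + cb t • sl n v i := by
              unfold wnat
              rw [hcc, hcd]
              rw [if_pos (Nat.mul_mod_right 2 i),
                Nat.mul_div_cancel_left i (by norm_num : 0 < 2)]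
              simp only [zero_smul, smul_zero, zero_add, add_zero]
            rw [he, gsmul_add, gsmul_rsmul, gsmul_rsmul] at heq
            exact heq
          have key : ∀ k i : ℕ, ∀ hi : i < n, n ≤ i + k → g • v ⟨i, hi⟩ = v ⟨i, hi⟩ := by
            intro k
            induction k with
            | zero => intro i hi hik; omega
            | succ k ih =>
              intro i hi hik
              rcases Nat.eq_zero_or_pos i with rfl | hip
              · have heq := hslot 0 hi
                rw [Nat.mul_zero] at heq
                rw [← add_smul, ← add_smul, hsum, one_smul, one_smul] at heq
                have hv : sl n v 0 = v ⟨0, hi⟩ := by unfold sl; rw [dif_pos hi]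
                rwa [hv] at heq
              · have heq := hslot i hi
                have hfix2 : g • sl n v (2 * i) = sl n v (2 * i) := by
                  by_cases h2 : 2 * i < n
                  · have hv : sl n v (2 * i) = v ⟨2 * i, h2⟩ := by
                      unfold sl; rw [dif_pos h2]
                    rw [hv]
                    exact ih (2 * i) h2 (by omega)
                  · have hv : sl n v (2 * i) = 0 := by unfold sl; rw [dif_neg h2]
                    rw [hv]
                    exact gsmul_zero' g
                rw [hfix2] at heq
                have heq2 := add_left_cancel heq
                rw [hcb] at heq2
                have hinj := smul_right_injective (G → ℝ) (ne_of_gt hbpos) heq2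
                have hv : sl n v i = v ⟨i, hi⟩ := by unfold sl; rw [dif_pos hi]
                rwa [hv] at hinj
          refine hback g hgx (fun i => ?_)
          have := key n i.val i.isLt (by omega)
          simpa using this
      · -- `cd t ≠ 0` : slot `0` carries a positive multiple of `v0`
        have hcd' : 0 < cd t := lt_of_le_of_ne (le_max_right _ _) (Ne.symm hcd)
        have ht34 : 3 / 4 < t := by
          by_contra hc
          push_neg at hc
          exact hcd (max_eq_right (by linarith))
        have hca : ca t = 0 := max_eq_right (by linarith)
        have hcb : cb t = 0 := by
          unfold cb
          rw [min_eq_right (by linarith : 3 - 4 * t ≤ 4 * t),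
            max_eq_right (by linarith : 3 - 4 * t ≤ 0),
            min_eq_left zero_le_one]
        have h0 := hw 0 (by omega)
        have he : wnat H n v t 0 = cd t • v0 H := by
          unfold wnat
          rw [hca, hcb, hcc, if_pos rfl]
          simp only [zero_smul, smul_zero, zero_add, add_zero, if_true]
        rw [he] at h0
        exact mem_of_smul_v0 H hcd h0
    · -- `cc t ≠ 0` : slot `1` carries a positive multiple of `v0`
      have hcc0 : 0 ≤ cc t := le_min (le_max_right _ _) zero_le_one
      have ht14 : 1 / 4 < t := by
        by_contra hc
        push_neg at hc
        have h1 : min (4 * t - 1) (4 - 4 * t) ≤ 0 := min_le_of_left_le (by linarith)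
        refine hcc ?_
        unfold cc
        rw [max_eq_right h1, min_eq_left zero_le_one]
      have hca : ca t = 0 := max_eq_right (by linarith)
      have h1 := hw 1 (by omega)
      have he : wnat H n v t 1 = cc t • v0 H := by
        unfold wnat
        rw [hca, if_neg (by omega : ¬ 1 % 2 = 0), if_pos rfl, if_neg (by omega : ¬ (1:ℕ) = 0)]
        simp only [zero_smul, smul_zero, zero_add, add_zero]
      rw [he] at h1
      exact mem_of_smul_v0 H hcc h1
  · intro hg
    obtain ⟨hgx, hgv⟩ := hmemH g hg
    refine stab_pair_iff.mpr ⟨hgx, fun j => ?_⟩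
    show g • wnat H n v t j.val = wnat H n v t j.val
    have hsl : ∀ m : ℕ, g • sl n v m = sl n v m := by
      intro m
      unfold sl
      split
      · exact hgv _
      · exact gsmul_zero' g
    have hb : g • (if (j:ℕ) % 2 = 0 then sl n v ((j:ℕ) / 2) else 0) =
        (if (j:ℕ) % 2 = 0 then sl n v ((j:ℕ) / 2) else 0) := by
      split
      · exact hsl _
      · exact gsmul_zero' g
    have hc1 : g • (if (j:ℕ) = 1 then v0 H else 0) = (if (j:ℕ) = 1 then v0 H else 0) := by
      split
      · exact smul_v0_of_mem H hg
      · exact gsmul_zero' g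
    have hd1 : g • (if (j:ℕ) = 0 then v0 H else 0) = (if (j:ℕ) = 0 then v0 H else 0) := by
      split
      · exact smul_v0_of_mem H hg
      · exact gsmul_zero' g
    unfold wnat
    rw [gsmul_add, gsmul_add, gsmul_add, gsmul_rsmul, gsmul_rsmul, gsmul_rsmul, gsmul_rsmul,
      hsl, hb, hc1, hd1]

end Aux2
section Aux3

open Limits

lemma cont_ite_branch {α : Type v} [TopologicalSpace α] (c : Prop) [Decidable c]
    (w : α → G → ℝ) (hw : Continuous w) :
    Continuous fun a => if c then w a else 0 := by
  by_cases h : c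
  · simpa [h] using hw
  · simp only [if_neg h]
    exact continuous_const

/-- The stage-level contraction map. -/
noncomputable def Kc (n : ℕ) :
    C(↥(stage X H n) × ↥unitInterval, ↥(stage X H (2 * n + 2))) := by
  refine ContinuousMap.mk
    (fun pt => ⟨(pt.1.val.1, fun j : Fin (2 * n + 2) => wnat H n pt.1.val.2 pt.2.val j.val),
      stab_wnat H pt.1.2 pt.2.2.1 pt.2.2.2⟩) ?_
  apply Continuous.subtype_mk
  refine Continuous.prodMk ?_ ?_
  · exact (continuous_subtype_val.comp continuous_fst).fst
  · apply continuous_pi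
    intro j
    have hv : Continuous fun pt : ↥(stage X H n) × ↥unitInterval => pt.1.val.2 :=
      (continuous_subtype_val.comp continuous_fst).snd
    have ht : Continuous fun pt : ↥(stage X H n) × ↥unitInterval => (pt.2 : ℝ) :=
      continuous_subtype_val.comp continuous_snd
    have hsl : ∀ m : ℕ,
        Continuous fun pt : ↥(stage X H n) × ↥unitInterval => sl n pt.1.val.2 m := by
      intro m
      unfold sl
      by_cases h : m < n
      · simp only [dif_pos h]
        exact (continuous_apply _).comp hv
      · simp only [dif_neg h]
        exact continuous_const
    have hca : Continuous ca := by unfold ca; fun_prop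
    have hcb : Continuous cb := by unfold cb; fun_prop
    have hcc : Continuous cc := by unfold cc; fun_prop
    have hcd : Continuous cd := by unfold cd; fun_prop
    unfold wnat
    refine (((((hca.comp ht).smul (hsl _)).add ?_).add ?_).add ?_)
    · exact (hcb.comp ht).smul (cont_ite_branch _ _ (hsl _))
    · exact (hcc.comp ht).smul (cont_ite_branch _ _ continuous_const)
    · exact (hcd.comp ht).smul (cont_ite_branch _ _ continuous_const)

/-- Computation of the transition maps of the directed system. -/
lemma stageFunctor_map_apply {n m : ℕ} (h : n ≤ m) (q : ↥(stage X H n)) :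
    (((stageFunctor (X := X) H).map (homOfLE h)) q).val =
      (q.val.1, fun j : Fin m => sl n q.val.2 j.val) := by
  induction m, h using Nat.le_induction with
  | base =>
    have h1 : (homOfLE (le_refl n) : n ⟶ n) = 𝟙 n := rfl
    rw [h1, CategoryTheory.Functor.map_id]
    show q.val = _
    refine Prod.ext rfl ?_
    funext j
    show q.val.2 j = sl n q.val.2 j.val
    unfold sl
    rw [dif_pos j.isLt]
  | succ m hm ih =>
    have h2 : (homOfLE (show n ≤ m + 1 by omega) : n ⟶ m + 1) =
        homOfLE hm ≫ homOfLE (Nat.le_succ m) := rfl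
    rw [h2, Functor.map_comp]
    have hstep : (stageFunctor (X := X) H).map (homOfLE (Nat.le_succ m)) =
        stageMap (X := X) H m := Functor.ofSequence_map_homOfLE_succ _ m
    rw [hstep]
    have ih2 := congrArg
      (fun r : X × (Fin m → G → ℝ) =>
        ((r.1, (Fin.snoc r.2 0 : Fin (m + 1) → G → ℝ)) : X × (Fin (m + 1) → G → ℝ))) ih
    refine Eq.trans ih2 ?_
    dsimp only
    refine Prod.ext rfl ?_
    show (Fin.snoc (fun j : Fin m => sl n q.val.2 j.val) 0 : Fin (m + 1) → G → ℝ) =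
      fun j : Fin (m + 1) => sl n q.val.2 j.val
    funext j
    induction j using Fin.lastCases with
    | last =>
      rw [Fin.snoc_last]
      show (0 : G → ℝ) = sl n q.val.2 m
      unfold sl
      rw [dif_neg (by omega)]
    | cast j' =>
      rw [Fin.snoc_castSucc]
      rfl

/-- Compatibility of the contractions with the transition maps. -/
lemma Kc_compat (n : ℕ) (q : ↥(stage X H n)) (t : ↥unitInterval) :
    Kc H (n + 1) (stageMap (X := X) H n q, t) =
      (stageFunctor (X := X) H).map
        (homOfLE (show 2 * n + 2 ≤ 2 * (n + 1) + 2 by omega)) (Kc H n (q, t)) := by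
  apply Subtype.ext
  rw [stageFunctor_map_apply]
  refine Prod.ext rfl ?_
  funext j
  show wnat H (n + 1) (Fin.snoc q.val.2 0) t.val j.val =
    sl (2 * n + 2) (fun j' : Fin (2 * n + 2) => wnat H n q.val.2 t.val j'.val) j.val
  rw [wnat_snoc]
  unfold sl
  by_cases hj : (j : ℕ) < 2 * n + 2
  · rw [dif_pos hj]
  · rw [dif_neg hj, wnat_ge H n q.val.2 t.val (by omega)]

/-- The components of the cocone giving the curried contraction on the colimit. -/
noncomputable def KcoconeApp (n : ℕ) : (stageFunctor (X := X) H).obj n ⟶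
    TopCat.of C(↥unitInterval, ↥(Limits.colimit (stageFunctor (X := X) H))) :=
  TopCat.ofHom <| ContinuousMap.curry
    ((Limits.colimit.ι (stageFunctor (X := X) H) (2 * n + 2)).hom.comp (Kc H n))

/-- The cocone giving the curried contraction on the colimit. -/
noncomputable def Kcocone : Limits.Cocone (stageFunctor (X := X) H) where
  pt := TopCat.of C(↥unitInterval, ↥(Limits.colimit (stageFunctor (X := X) H)))
  ι :=
    { app := KcoconeApp H
      naturality := by
        have key : ∀ (n m : ℕ) (h : n ≤ m),
            (stageFunctor (X := X) H).map (homOfLE h) ≫ KcoconeApp H m =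
              KcoconeApp H n := by
          intro n m h
          induction m, h using Nat.le_induction with
          | base =>
            rw [show (homOfLE (le_refl n) : n ⟶ n) = 𝟙 n from rfl,
              CategoryTheory.Functor.map_id]
            exact Category.id_comp _
          | succ m hnm ih =>
            rw [← homOfLE_comp hnm (Nat.le_succ m), Functor.map_comp]
            refine (Category.assoc _ _ _).trans ?_
            have hstep : (stageFunctor (X := X) H).map (homOfLE (Nat.le_succ m)) =
                stageMap (X := X) H m := Functor.ofSequence_map_homOfLE_succ _ m
            rw [hstep]
            have hcoll : stageMap (X := X) H m ≫ KcoconeApp H (m + 1) = KcoconeApp H m := by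
              apply TopCat.ext
              intro q
              apply ContinuousMap.ext
              intro t
              show (Limits.colimit.ι (stageFunctor (X := X) H) (2 * (m + 1) + 2))
                  (Kc H (m + 1) (stageMap (X := X) H m q, t)) =
                (Limits.colimit.ι (stageFunctor (X := X) H) (2 * m + 2)) (Kc H m (q, t))
              rw [Kc_compat]
              exact Limits.colimit.w_apply (stageFunctor (X := X) H)
                (homOfLE (show 2 * m + 2 ≤ 2 * (m + 1) + 2 by omega)) (Kc H m (q, t))
            erw [hcoll, ih]
        intro n m f
        have hf : f = homOfLE (leOfHom f) := rfl
        rw [hf, key, Functor.const_obj_map]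
        exact (Category.comp_id _).symm }

/-- The contraction, as a map from the colimit to the path space of the colimit. -/
noncomputable def Khat :
    (Limits.colimit (stageFunctor (X := X) H) : TopCat) ⟶
      TopCat.of C(unitInterval, (Limits.colimit (stageFunctor (X := X) H) : TopCat)) :=
  Limits.colimit.desc (stageFunctor (X := X) H) (Kcocone H)

/-- The section `X^H → (X × ℝ[G]¹)_H`. -/
noncomputable def sect : (fixedH X H : TopCat) ⟶ (stage X H 1 : TopCat) :=
  TopCat.ofHom <| ContinuousMap.mk
    (fun y => ⟨(y.val, fun _ => v0 H), by
      ext g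
      constructor
      · intro hg
        obtain ⟨-, hgv⟩ := stab_pair_iff.mp hg
        exact mem_of_smul_v0' H (hgv 0)
      · intro hg
        exact stab_pair_iff.mpr ⟨y.2 g hg, fun _ => smul_v0_of_mem H hg⟩⟩)
    (by
      apply Continuous.subtype_mk
      exact continuous_subtype_val.prodMk continuous_const)

/-- The section `X^H → colim`. -/
noncomputable def sbar : (fixedH X H : TopCat) ⟶
    (Limits.colimit (stageFunctor (X := X) H) : TopCat) :=
  sect H ≫ Limits.colimit.ι (stageFunctor (X := X) H) 1

end Aux3
section Aux4

open Limits

/-- Evaluation of the contraction. -/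
noncomputable def Kt (p : ↥(Limits.colimit (stageFunctor (X := X) H))) (t : ↥unitInterval) :
    ↥(Limits.colimit (stageFunctor (X := X) H)) :=
  (show C(↥unitInterval, ↥(Limits.colimit (stageFunctor (X := X) H))) from Khat H p) t

lemma Kt_continuous :
    Continuous fun p : ↥(Limits.colimit (stageFunctor (X := X) H)) × ↥unitInterval =>
      Kt H p.1 p.2 := by
  have h1 : Continuous fun p :
      ↥(Limits.colimit (stageFunctor (X := X) H)) × ↥unitInterval =>
      ((show C(↥unitInterval, ↥(Limits.colimit (stageFunctor (X := X) H))) from Khat H p.1),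
        p.2) :=
    ((Khat H).hom.continuous.comp continuous_fst).prodMk continuous_snd
  exact ContinuousEval.continuous_eval.comp h1

lemma Kt_app (m : ℕ) (q : ↥(stage X H m)) (t : ↥unitInterval) :
    Kt H (Limits.colimit.ι (stageFunctor (X := X) H) m q) t =
      Limits.colimit.ι (stageFunctor (X := X) H) (2 * m + 2) (Kc H m (q, t)) := by
  have h := Limits.colimit.ι_desc_apply (Kcocone H) m q
  exact congrArg
    (fun φ : ↥(TopCat.of C(↥unitInterval, ↥(Limits.colimit (stageFunctor (X := X) H)))) =>
      (show C(↥unitInterval, ↥(Limits.colimit (stageFunctor (X := X) H))) from φ) t) h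

lemma Kt_zero (p : ↥(Limits.colimit (stageFunctor (X := X) H))) (t : ↥unitInterval)
    (ht : (t : ℝ) = 0) : Kt H p t = p := by
  obtain ⟨m, q, rfl⟩ := Limits.Concrete.colimit_exists_rep (stageFunctor (X := X) H) p
  erw [Kt_app]
  have hKq : Kc H m (q, t) =
      (stageFunctor (X := X) H).map (homOfLE (show m ≤ 2 * m + 2 by omega)) q := by
    apply Subtype.ext
    erw [stageFunctor_map_apply]
    refine Prod.ext rfl ?_
    funext j
    show wnat H m q.val.2 t.val j.val = sl m q.val.2 j.val
    rw [ht, wnat_zero]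
  rw [hKq]
  exact Limits.colimit.w_apply _ _ _

lemma Kt_one (p : ↥(Limits.colimit (stageFunctor (X := X) H))) (t : ↥unitInterval)
    (ht : (t : ℝ) = 1) :
    Kt H p t = sbar H
      ((Limits.colimit.desc (stageFunctor (X := X) H) (collapseCocone H)) p) := by
  obtain ⟨m, q, rfl⟩ := Limits.Concrete.colimit_exists_rep (stageFunctor (X := X) H) p
  erw [Kt_app]
  have hdesc : (Limits.colimit.desc (stageFunctor (X := X) H) (collapseCocone H))
      (Limits.colimit.ι (stageFunctor (X := X) H) m q) = collapse H m q :=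
    Limits.colimit.ι_desc_apply (collapseCocone H) m q
  have hKq : Kc H m (q, t) =
      (stageFunctor (X := X) H).map (homOfLE (show 1 ≤ 2 * m + 2 by omega))
        (sect H (collapse H m q)) := by
    apply Subtype.ext
    rw [stageFunctor_map_apply]
    refine Prod.ext rfl ?_
    funext j
    show wnat H m q.val.2 t.val j.val = sl 1 (fun _ => v0 H) j.val
    rw [ht, wnat_one]
    unfold sl
    by_cases hj : (j : ℕ) = 0
    · rw [if_pos hj, dif_pos (by omega)]
    · rw [if_neg hj, dif_neg (by omega)]
  erw [hKq, Limits.colimit.w_apply, hdesc]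
  rfl

lemma desc_Kt (p : ↥(Limits.colimit (stageFunctor (X := X) H))) (t : ↥unitInterval) :
    (Limits.colimit.desc (stageFunctor (X := X) H) (collapseCocone H)) (Kt H p t) =
      (Limits.colimit.desc (stageFunctor (X := X) H) (collapseCocone H)) p := by
  obtain ⟨m, q, rfl⟩ := Limits.Concrete.colimit_exists_rep (stageFunctor (X := X) H) p
  erw [Kt_app, Limits.colimit.ι_desc_apply, Limits.colimit.ι_desc_apply]
  exact Subtype.ext rfl

lemma desc_sbar (y : ↥(fixedH X H)) :
    (Limits.colimit.desc (stageFunctor (X := X) H) (collapseCocone H)) (sbar H y) = y := by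
  have h1 : sbar H y = Limits.colimit.ι (stageFunctor (X := X) H) 1 (sect H y) := rfl
  erw [h1, Limits.colimit.ι_desc_apply]
  exact Subtype.ext rfl

end Aux4

section Glue

/-- Gluing a function defined piecewise on the closed pieces `{φ ≤ c}` and `{c ≤ φ}`. -/
lemma glue_continuous {Z W : Type*} [TopologicalSpace Z] [TopologicalSpace W]
    {φ : Z → ℝ} (hφ : Continuous φ) (c : ℝ)
    {f : {z : Z // φ z ≤ c} → W} {g : {z : Z // c ≤ φ z} → W}
    (hf : Continuous f) (hg : Continuous g)
    (hfg : ∀ z h1 h2, f ⟨z, h1⟩ = g ⟨z, h2⟩) :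
    Continuous fun z : Z => if h : φ z ≤ c then f ⟨z, h⟩ else g ⟨z, le_of_not_ge h⟩ := by
  rw [continuous_iff_isClosed]
  intro C hC
  have hA : IsClosed {z : Z | φ z ≤ c} := isClosed_le hφ continuous_const
  have hB : IsClosed {z : Z | c ≤ φ z} := isClosed_le continuous_const hφ
  have key : (fun z : Z => if h : φ z ≤ c then f ⟨z, h⟩ else g ⟨z, le_of_not_ge h⟩) ⁻¹' C =
      (Subtype.val '' (f ⁻¹' C)) ∪ (Subtype.val '' (g ⁻¹' C)) := by
    ext z
    simp only [Set.mem_preimage, Set.mem_union, Set.mem_image]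
    constructor
    · intro hz
      by_cases h : φ z ≤ c
      · left
        refine ⟨⟨z, h⟩, ?_, rfl⟩
        rw [dif_pos h] at hz
        exact hz
      · right
        refine ⟨⟨z, le_of_not_ge h⟩, ?_, rfl⟩
        rw [dif_neg h] at hz
        exact hz
    · rintro (⟨⟨w, hw⟩, hwC, rfl⟩ | ⟨⟨w, hw⟩, hwC, rfl⟩)
      · rw [dif_pos hw]
        exact hwC
      · by_cases h : φ w ≤ c
        · rw [dif_pos h, hfg w h hw]
          exact hwC
        · rw [dif_neg h]
          exact hwC
  rw [key]
  exact ((hA.isClosedEmbedding_subtypeVal.isClosedMap _ (hC.preimage hf))).union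
    (hB.isClosedEmbedding_subtypeVal.isClosedMap _ (hC.preimage hg))

end Glue
section Rho

/-- The radial reparametrization of the closed unit ball collapsing the inner ball of
radius `1/2` and stretching radially. -/
noncomputable def rho (N : ℕ) (w : EuclideanSpace ℝ (Fin N)) : EuclideanSpace ℝ (Fin N) :=
  min 2 ‖w‖⁻¹ • w

lemma rho_norm_le (N : ℕ) (w : EuclideanSpace ℝ (Fin N)) (hw : ‖w‖ ≤ 1) :
    ‖rho N w‖ ≤ 1 := by
  rcases eq_or_ne w 0 with rfl | h
  · simp [rho]
  · have hpos : 0 < ‖w‖ := norm_pos_iff.mpr h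
    have h1 : min 2 ‖w‖⁻¹ ≤ ‖w‖⁻¹ := min_le_right _ _
    have h0 : 0 ≤ min 2 ‖w‖⁻¹ := le_min (by norm_num) (inv_nonneg.mpr hpos.le)
    rw [rho, norm_smul, Real.norm_eq_abs, abs_of_nonneg h0]
    calc min 2 ‖w‖⁻¹ * ‖w‖ ≤ ‖w‖⁻¹ * ‖w‖ := by
          exact mul_le_mul_of_nonneg_right h1 hpos.le
      _ = 1 := inv_mul_cancel₀ hpos.ne'

lemma rho_small (N : ℕ) (w : EuclideanSpace ℝ (Fin N)) (hw : ‖w‖ ≤ 1 / 2) :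
    rho N w = (2 : ℝ) • w := by
  rcases eq_or_ne w 0 with rfl | h
  · rw [rho, smul_zero, smul_zero]
  · have hpos : 0 < ‖w‖ := norm_pos_iff.mpr h
    have h2 : (2 : ℝ) ≤ ‖w‖⁻¹ := by
      have := inv_anti₀ hpos (by linarith : ‖w‖ ≤ 2⁻¹)
      rwa [inv_inv] at this
    rw [rho, min_eq_left h2]

lemma rho_big (N : ℕ) (w : EuclideanSpace ℝ (Fin N)) (hw : 1 / 2 ≤ ‖w‖) :
    rho N w = ‖w‖⁻¹ • w := by
  have hpos : (0:ℝ) < 1 / 2 := by norm_num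
  have h2 : ‖w‖⁻¹ ≤ 2 := by
    have := inv_anti₀ hpos hw
    norm_num at this
    exact this
  rw [rho, min_eq_right h2]

lemma rho_one (N : ℕ) (w : EuclideanSpace ℝ (Fin N)) (hw : ‖w‖ = 1) : rho N w = w := by
  rw [rho_big N w (by rw [hw]; norm_num), hw, inv_one, one_smul]

lemma rho_cont (N : ℕ) : Continuous (rho N) := by
  rw [continuous_iff_continuousAt]
  intro w
  rcases eq_or_ne w 0 with rfl | h
  · have hb : ∀ x : EuclideanSpace ℝ (Fin N), ‖rho N x‖ ≤ 2 * ‖x‖ := by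
      intro x
      have h0 : 0 ≤ min 2 ‖x‖⁻¹ := le_min (by norm_num) (inv_nonneg.mpr (norm_nonneg x))
      rw [rho, norm_smul, Real.norm_eq_abs, abs_of_nonneg h0]
      exact mul_le_mul_of_nonneg_right (min_le_left _ _) (norm_nonneg x)
    have hρ0 : rho N 0 = 0 := by rw [rho, smul_zero]
    unfold ContinuousAt
    rw [hρ0, tendsto_zero_iff_norm_tendsto_zero]
    refine squeeze_zero (fun x => norm_nonneg _) hb ?_
    have : Continuous fun x : EuclideanSpace ℝ (Fin N) => 2 * ‖x‖ :=
      continuous_const.mul continuous_norm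
    have h2 := this.tendsto (0 : EuclideanSpace ℝ (Fin N))
    simpa using h2
  · have hne : ‖w‖ ≠ 0 := norm_ne_zero_iff.mpr h
    exact (continuousAt_const.min (continuous_norm.continuousAt.inv₀ hne)).smul
      continuousAt_id

end Rho

section Maps

open Limits

/-- The inner part of the lift. -/
noncomputable def innMap (N : ℕ)
    (β : C(↥(closedBall (0 : EuclideanSpace ℝ (Fin N)) 1), ↥(fixedH X H)))
    (z : {z : ↥(closedBall (0 : EuclideanSpace ℝ (Fin N)) 1) //
      ‖(z.val : EuclideanSpace ℝ (Fin N))‖ ≤ 1 / 2}) :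
    ↥(Limits.colimit (stageFunctor (X := X) H)) :=
  sbar H (β ⟨(2 : ℝ) • (z.val : EuclideanSpace ℝ (Fin N)), by
    rw [mem_closedBall_zero_iff, norm_smul, Real.norm_eq_abs,
      abs_of_nonneg (by norm_num : (0:ℝ) ≤ 2)]
    have := z.2
    linarith⟩)

/-- The outer (annulus) part of the lift. -/
noncomputable def outMap (N : ℕ)
    (γ : C(↥(sphere (0 : EuclideanSpace ℝ (Fin N)) 1),
      ↥(Limits.colimit (stageFunctor (X := X) H))))
    (z : {z : ↥(closedBall (0 : EuclideanSpace ℝ (Fin N)) 1) //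
      1 / 2 ≤ ‖(z.val : EuclideanSpace ℝ (Fin N))‖}) :
    ↥(Limits.colimit (stageFunctor (X := X) H)) :=
  Kt H (γ ⟨‖(z.val : EuclideanSpace ℝ (Fin N))‖⁻¹ • (z.val : EuclideanSpace ℝ (Fin N)), by
      have hpos : (0:ℝ) < ‖(z.val : EuclideanSpace ℝ (Fin N))‖ :=
        lt_of_lt_of_le (by norm_num) z.2
      rw [mem_sphere_zero_iff_norm, norm_smul, Real.norm_eq_abs,
        abs_of_nonneg (inv_nonneg.mpr hpos.le), inv_mul_cancel₀ hpos.ne']⟩)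
    ⟨2 - 2 * ‖(z.val : EuclideanSpace ℝ (Fin N))‖, by
      have h1 : ‖(z.val : EuclideanSpace ℝ (Fin N))‖ ≤ 1 := mem_closedBall_zero_iff.mp z.val.2
      have h2 := z.2
      constructor
      · linarith
      · linarith⟩

lemma innMap_continuous (N : ℕ)
    (β : C(↥(closedBall (0 : EuclideanSpace ℝ (Fin N)) 1), ↥(fixedH X H))) :
    Continuous (innMap H N β) := by
  apply (sbar H).hom.continuous.comp
  apply β.continuous.comp
  apply Continuous.subtype_mk
  exact ((continuous_subtype_val.comp continuous_subtype_val).const_smul (2 : ℝ) :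
    Continuous fun z : {z : ↥(closedBall (0 : EuclideanSpace ℝ (Fin N)) 1) //
      ‖(z.val : EuclideanSpace ℝ (Fin N))‖ ≤ 1 / 2} => (2 : ℝ) • (z.val : EuclideanSpace ℝ (Fin N)))

lemma outMap_continuous (N : ℕ)
    (γ : C(↥(sphere (0 : EuclideanSpace ℝ (Fin N)) 1),
      ↥(Limits.colimit (stageFunctor (X := X) H)))) :
    Continuous (outMap H N γ) := by
  have hval : Continuous fun z : {z : ↥(closedBall (0 : EuclideanSpace ℝ (Fin N)) 1) //
      1 / 2 ≤ ‖(z.val : EuclideanSpace ℝ (Fin N))‖} =>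
      (z.val : EuclideanSpace ℝ (Fin N)) :=
    continuous_subtype_val.comp continuous_subtype_val
  have hne : ∀ z : {z : ↥(closedBall (0 : EuclideanSpace ℝ (Fin N)) 1) //
      1 / 2 ≤ ‖(z.val : EuclideanSpace ℝ (Fin N))‖},
      ‖(z.val : EuclideanSpace ℝ (Fin N))‖ ≠ 0 :=
    fun z => (lt_of_lt_of_le (by norm_num) z.2).ne'
  have hu : Continuous fun z : {z : ↥(closedBall (0 : EuclideanSpace ℝ (Fin N)) 1) //
      1 / 2 ≤ ‖(z.val : EuclideanSpace ℝ (Fin N))‖} =>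
      (‖(z.val : EuclideanSpace ℝ (Fin N))‖⁻¹ • (z.val : EuclideanSpace ℝ (Fin N))) :=
    (hval.norm.inv₀ hne).smul hval
  have ht : Continuous fun z : {z : ↥(closedBall (0 : EuclideanSpace ℝ (Fin N)) 1) //
      1 / 2 ≤ ‖(z.val : EuclideanSpace ℝ (Fin N))‖} =>
      (2 - 2 * ‖(z.val : EuclideanSpace ℝ (Fin N))‖) :=
    continuous_const.sub (continuous_const.mul hval.norm)
  exact (Kt_continuous H).comp
    ((γ.continuous.comp (hu.subtype_mk _)).prodMk (ht.subtype_mk _))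

end Maps
/-- Let a finite group `G` act on a space `X` and let `H ≤ G`.  The map
`colim_n (X × ℝ[G]ⁿ)_H → X^H` induced by the collapse maps is a weak homotopy
equivalence. -/
theorem colim_isotropy_to_fixed_is_weak_equivalence :
    IsWeakHomotopyEquiv
      (show C((Limits.colimit (stageFunctor (X := X) H) : TopCat), (fixedH X H : TopCat)) from
        (Limits.colimit.desc (stageFunctor (X := X) H) (collapseCocone H)).hom) := by
  intro N γ β hβγ
  have hβγ' : ∀ y : ↥(sphere (0 : EuclideanSpace ℝ (Fin N)) 1),
      β ⟨y.1, sphere_subset_closedBall y.2⟩ =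
        (Limits.colimit.desc (stageFunctor (X := X) H) (collapseCocone H)) (γ y) := hβγ
  -- boundary matching for the gluing
  have hmatch : ∀ (z : ↥(closedBall (0 : EuclideanSpace ℝ (Fin N)) 1))
      (h1 : ‖(z : EuclideanSpace ℝ (Fin N))‖ ≤ 1 / 2)
      (h2 : 1 / 2 ≤ ‖(z : EuclideanSpace ℝ (Fin N))‖),
      innMap H N β ⟨z, h1⟩ = outMap H N γ ⟨z, h2⟩ := by
    intro z h1 h2
    have hz : ‖(z : EuclideanSpace ℝ (Fin N))‖ = 1 / 2 := le_antisymm h1 h2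
    unfold innMap outMap
    rw [Kt_one H _ _ (show (2 : ℝ) - 2 * ‖(z : EuclideanSpace ℝ (Fin N))‖ = 1 by
      rw [hz]; norm_num)]
    rw [← hβγ']
    refine congrArg (sbar H) (congrArg β (Subtype.ext ?_))
    show (2 : ℝ) • (z : EuclideanSpace ℝ (Fin N)) =
      ‖(z : EuclideanSpace ℝ (Fin N))‖⁻¹ • (z : EuclideanSpace ℝ (Fin N))
    rw [hz]
    norm_num
  set gfun : ↥(closedBall (0 : EuclideanSpace ℝ (Fin N)) 1) →
      ↥(Limits.colimit (stageFunctor (X := X) H)) := fun z =>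
    if h : ‖(z : EuclideanSpace ℝ (Fin N))‖ ≤ 1 / 2 then innMap H N β ⟨z, h⟩
    else outMap H N γ ⟨z, le_of_not_ge h⟩ with hgfun
  have hgc : Continuous gfun :=
    glue_continuous continuous_subtype_val.norm (1 / 2) (innMap_continuous H N β)
      (outMap_continuous H N γ) hmatch
  have hKey : ∀ z : ↥(closedBall (0 : EuclideanSpace ℝ (Fin N)) 1),
      (Limits.colimit.desc (stageFunctor (X := X) H) (collapseCocone H)) (gfun z) =
        β ⟨rho N (z : EuclideanSpace ℝ (Fin N)),
          mem_closedBall_zero_iff.mpr (rho_norm_le N _ (mem_closedBall_zero_iff.mp z.2))⟩ := by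
    intro z
    rw [hgfun]
    dsimp only
    by_cases h : ‖(z : EuclideanSpace ℝ (Fin N))‖ ≤ 1 / 2
    · rw [dif_pos h]
      unfold innMap
      rw [desc_sbar H]
      exact congrArg β (Subtype.ext (rho_small N _ h).symm)
    · rw [dif_neg h]
      unfold outMap
      rw [desc_Kt H, ← hβγ']
      exact congrArg β (Subtype.ext (rho_big N _ (le_of_not_ge h)).symm)
  refine ⟨ContinuousMap.mk gfun hgc, ?_, ?_⟩
  · -- the lift restricts to `γ` on the boundary sphere
    intro y
    have hy : ‖(y : EuclideanSpace ℝ (Fin N))‖ = 1 := mem_sphere_zero_iff_norm.mp y.2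
    show gfun ⟨y.1, sphere_subset_closedBall y.2⟩ = γ y
    rw [hgfun]
    dsimp only
    rw [dif_neg (show ¬ (‖(y : EuclideanSpace ℝ (Fin N))‖ ≤ 1 / 2) by rw [hy]; norm_num)]
    unfold outMap
    rw [Kt_zero H _ _ (show (2 : ℝ) - 2 * ‖(y : EuclideanSpace ℝ (Fin N))‖ = 0 by
      rw [hy]; ring)]
    refine congrArg γ (Subtype.ext ?_)
    show ‖(y : EuclideanSpace ℝ (Fin N))‖⁻¹ • (y : EuclideanSpace ℝ (Fin N)) =
      (y : EuclideanSpace ℝ (Fin N))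
    rw [hy, inv_one, one_smul]
  · -- the homotopy rel boundary
    have hmem : ∀ p : ↥unitInterval × ↥(closedBall (0 : EuclideanSpace ℝ (Fin N)) 1),
        (1 - (p.1 : ℝ)) • rho N (p.2 : EuclideanSpace ℝ (Fin N)) +
          (p.1 : ℝ) • (p.2 : EuclideanSpace ℝ (Fin N)) ∈
          closedBall (0 : EuclideanSpace ℝ (Fin N)) 1 := by
      intro p
      rw [mem_closedBall_zero_iff]
      have h1 : ‖rho N (p.2 : EuclideanSpace ℝ (Fin N))‖ ≤ 1 :=
        rho_norm_le N _ (mem_closedBall_zero_iff.mp p.2.2)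
      have h2 : ‖(p.2 : EuclideanSpace ℝ (Fin N))‖ ≤ 1 := mem_closedBall_zero_iff.mp p.2.2
      have h3 : (0 : ℝ) ≤ (p.1 : ℝ) := p.1.2.1
      have h4 : (p.1 : ℝ) ≤ 1 := p.1.2.2
      calc ‖(1 - (p.1 : ℝ)) • rho N (p.2 : EuclideanSpace ℝ (Fin N)) +
            (p.1 : ℝ) • (p.2 : EuclideanSpace ℝ (Fin N))‖ ≤
          ‖(1 - (p.1 : ℝ)) • rho N (p.2 : EuclideanSpace ℝ (Fin N))‖ +
            ‖(p.1 : ℝ) • (p.2 : EuclideanSpace ℝ (Fin N))‖ := norm_add_le _ _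
        _ = (1 - (p.1 : ℝ)) * ‖rho N (p.2 : EuclideanSpace ℝ (Fin N))‖ +
            (p.1 : ℝ) * ‖(p.2 : EuclideanSpace ℝ (Fin N))‖ := by
            rw [norm_smul, norm_smul, Real.norm_eq_abs, Real.norm_eq_abs,
              abs_of_nonneg (by linarith), abs_of_nonneg h3]
        _ ≤ (1 - (p.1 : ℝ)) * 1 + (p.1 : ℝ) * 1 := by
            gcongr <;> linarith
        _ = 1 := by ring
    have hcmb : Continuous fun p :
        ↥unitInterval × ↥(closedBall (0 : EuclideanSpace ℝ (Fin N)) 1) =>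
        (1 - (p.1 : ℝ)) • rho N (p.2 : EuclideanSpace ℝ (Fin N)) +
          (p.1 : ℝ) • (p.2 : EuclideanSpace ℝ (Fin N)) := by
      have hv1 : Continuous fun p :
          ↥unitInterval × ↥(closedBall (0 : EuclideanSpace ℝ (Fin N)) 1) => (p.1 : ℝ) :=
        continuous_subtype_val.comp continuous_fst
      have hv2 : Continuous fun p :
          ↥unitInterval × ↥(closedBall (0 : EuclideanSpace ℝ (Fin N)) 1) =>
          (p.2 : EuclideanSpace ℝ (Fin N)) :=
        continuous_subtype_val.comp continuous_snd
      exact ((continuous_const.sub hv1).smul ((rho_cont N).comp hv2)).add (hv1.smul hv2)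
    refine ⟨{ toContinuousMap :=
                ContinuousMap.mk
                  (fun p => β ⟨(1 - (p.1 : ℝ)) • rho N (p.2 : EuclideanSpace ℝ (Fin N)) +
                    (p.1 : ℝ) • (p.2 : EuclideanSpace ℝ (Fin N)), hmem p⟩)
                  (β.continuous.comp (hcmb.subtype_mk _)),
              map_zero_left := ?_,
              map_one_left := ?_,
              prop' := ?_ }⟩
    · intro z
      have harg : (1 - ((0 : ↥unitInterval) : ℝ)) • rho N (z : EuclideanSpace ℝ (Fin N)) +
          ((0 : ↥unitInterval) : ℝ) • (z : EuclideanSpace ℝ (Fin N)) =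
          rho N (z : EuclideanSpace ℝ (Fin N)) := by
        norm_num
      exact Eq.trans (congrArg β (Subtype.ext harg)) (hKey z).symm
    · intro z
      have harg : (1 - ((1 : ↥unitInterval) : ℝ)) • rho N (z : EuclideanSpace ℝ (Fin N)) +
          ((1 : ↥unitInterval) : ℝ) • (z : EuclideanSpace ℝ (Fin N)) =
          (z : EuclideanSpace ℝ (Fin N)) := by
        norm_num
      exact congrArg β (Subtype.ext harg)
    · intro t x hx
      have hx1 : ‖(x : EuclideanSpace ℝ (Fin N))‖ = 1 := mem_sphere_zero_iff_norm.mp hx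
      have hrho : rho N (x : EuclideanSpace ℝ (Fin N)) = (x : EuclideanSpace ℝ (Fin N)) :=
        rho_one N _ hx1
      have harg : (1 - (t : ℝ)) • rho N (x : EuclideanSpace ℝ (Fin N)) +
          (t : ℝ) • (x : EuclideanSpace ℝ (Fin N)) =
          rho N (x : EuclideanSpace ℝ (Fin N)) := by
        rw [hrho, ← add_smul, sub_add_cancel, one_smul]
      exact Eq.trans (congrArg β (Subtype.ext harg)) (hKey x).symm
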